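/- arXiv:2408.16673 — 3 statements merged into one kernel-verified Lean document; each statement's English description precedes it below -/
import Mathlib

section
/- For 0 < β < 1 and strictly positive pmf f on a finite set, the entropy of the tilted distribution q_β(y) ∝ f(y)^{1/β} is at most the entropy of f: H(q_β) ≤ H(f). -/
lemma gibbs_aux {ι : Type*} [Fintype ι] (p g : ι → ℝ)
    (hp : ∀ y, 0 < p y) (hg : ∀ y, 0 < g y)
    (hps : ∑ y, p y = 1) (hgs : ∑ y, g y = 1) :
    ∑ y, p y * Real.log (g y) ≤ ∑ y, p y * Real.log (p y) := by
  have key : ∑ y, (p y * Real.log (g y) - p y * Real.log (p y)) ≤ 0 := by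
    have h1 : ∀ y : ι, p y * Real.log (g y) - p y * Real.log (p y) ≤ g y - p y := by
      intro y
      have hdiv : 0 < g y / p y := div_pos (hg y) (hp y)
      have h := Real.log_le_sub_one_of_pos hdiv
      rw [Real.log_div (hg y).ne' (hp y).ne'] at h
      have h2 := mul_le_mul_of_nonneg_left h (hp y).le
      have h3 : p y * (g y / p y - 1) = g y - p y := by
        rw [mul_sub, mul_one, mul_div_cancel₀ _ (hp y).ne']
      nlinarith [h2, h3]
    calc ∑ y, (p y * Real.log (g y) - p y * Real.log (p y)) ≤ ∑ y, (g y - p y) :=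
          Finset.sum_le_sum fun y _ => h1 y
      _ = 0 := by rw [Finset.sum_sub_distrib, hps, hgs]; ring
  rw [Finset.sum_sub_distrib] at key
  linarith

/-- For `0 < β < 1`, the Shannon entropy of the tilted distribution
`q_β(y) ∝ f(y)^{1/β}` is at most the entropy of `f`. -/
theorem tilted_entropy_le {ι : Type*} [Fintype ι]
    (f : ι → ℝ) (hf : ∀ y, 0 < f y) (hfsum : ∑ y, f y = 1)
    (β : ℝ) (hβ0 : 0 < β) (hβ1 : β < 1)
    (q : ι → ℝ) (hq : q = fun y => f y ^ (1 / β) / ∑ y', f y' ^ (1 / β)) :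
    -∑ y, q y * Real.log (q y) ≤ -∑ y, f y * Real.log (f y) := by
  have hne : Nonempty ι := by
    by_contra h
    rw [not_nonempty_iff] at h
    simp [Finset.univ_eq_empty] at hfsum
  set t := 1 / β with ht
  have ht1 : 1 < t := one_lt_one_div hβ0 hβ1
  set Z := ∑ y', f y' ^ t with hZ
  have hZpos : 0 < Z := Finset.sum_pos (fun y _ => Real.rpow_pos_of_pos (hf y) t)
    Finset.univ_nonempty
  have hqpos : ∀ y, 0 < q y := by
    intro y; rw [hq]; exact div_pos (Real.rpow_pos_of_pos (hf y) t) hZpos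
  have hqsum : ∑ y, q y = 1 := by
    rw [hq]; rw [← Finset.sum_div]; exact div_self hZpos.ne'
  have hlogq : ∀ y, Real.log (q y) = t * Real.log (f y) - Real.log Z := by
    intro y
    rw [hq]
    simp only
    rw [Real.log_div (Real.rpow_pos_of_pos (hf y) t).ne' hZpos.ne',
      Real.log_rpow (hf y)]
  set Sf := ∑ y, f y * Real.log (f y) with hSf
  set A := ∑ y, q y * Real.log (f y) with hA
  set Sq := ∑ y, q y * Real.log (q y) with hSq
  -- Gibbs 1: ∑ f log q ≤ Sf
  have g1 : ∑ y, f y * Real.log (q y) ≤ Sf := gibbs_aux f q hf hqpos hfsum hqsum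
  have e1 : ∑ y, f y * Real.log (q y) = t * Sf - Real.log Z := by
    have h : ∀ y : ι, f y * Real.log (q y)
        = t * (f y * Real.log (f y)) - f y * Real.log Z := fun y => by
      rw [hlogq y]; ring
    simp only [h]
    rw [Finset.sum_sub_distrib, ← Finset.mul_sum, ← Finset.sum_mul, hfsum, one_mul, ← hSf]
  -- Gibbs 2: A ≤ Sq
  have g2 : A ≤ Sq := gibbs_aux q f hqpos hf hqsum hfsum
  have e2 : Sq = t * A - Real.log Z := by
    have h : ∀ y : ι, q y * Real.log (q y)
        = t * (q y * Real.log (f y)) - q y * Real.log Z := fun y => by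
      rw [hlogq y]; ring
    rw [hSq]
    simp only [h]
    rw [Finset.sum_sub_distrib, ← Finset.mul_sum, ← Finset.sum_mul, hqsum, one_mul, ← hA]
  -- combine
  nlinarith [g1, g2, e1, e2, mul_le_mul_of_nonneg_left g2 (sub_pos.mpr ht1).le]
end

section
/- The optimal value of the entropy-regularized reverse KL problem: for strictly positive pmf p on finite Y and γ > 0, min over pmfs f of [D_KL(f‖p) - γ·H(f)] equals -(γ+1)·log(Σ_y p(y)^{1/(γ+1)}). -/
/-- The optimal value of the entropy-regularized reverse KL problem:
`min_f [D_KL(f‖p) - γ·H(f)] = -(γ+1)·log(Σ_y p(y)^{1/(γ+1)})`. -/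
theorem reverse_kl_entropy_optimal_value {ι : Type*} [Fintype ι]
    (p : ι → ℝ) (hp : ∀ y, 0 < p y) (hpsum : ∑ y, p y = 1)
    (γ : ℝ) (hγ : 0 < γ) :
    IsLeast
      {v : ℝ | ∃ f : ι → ℝ, (∀ y, 0 ≤ f y) ∧ ∑ y, f y = 1 ∧
        v = (∑ y, f y * Real.log (f y / p y)) - γ * (-∑ y, f y * Real.log (f y))}
      (-(γ + 1) * Real.log (∑ y, p y ^ (1 / (γ + 1)))) := by
  classical
  cases isEmpty_or_nonempty ι with
  | inl h => simp at hpsum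
  | inr h =>
  have hγ1 : (0:ℝ) < γ + 1 := by linarith
  set a : ℝ := 1 / (γ + 1) with ha
  have h1 : (γ + 1) * a = 1 := by rw [ha]; exact mul_one_div_cancel hγ1.ne'
  set Z : ℝ := ∑ y, p y ^ a with hZ
  have hZpos : 0 < Z :=
    Finset.sum_pos (fun y _ => Real.rpow_pos_of_pos (hp y) a) Finset.univ_nonempty
  set q : ι → ℝ := fun y => p y ^ a / Z with hq
  have hqpos : ∀ y, 0 < q y := fun y =>
    div_pos (Real.rpow_pos_of_pos (hp y) a) hZpos
  have hqsum : ∑ y, q y = 1 := by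
    rw [hq]
    rw [← Finset.sum_div, ← hZ, div_self hZpos.ne']
  have hlogq : ∀ y, Real.log (q y) = a * Real.log (p y) - Real.log Z := by
    intro y
    rw [hq]
    rw [Real.log_div (Real.rpow_pos_of_pos (hp y) a).ne' hZpos.ne',
      Real.log_rpow (hp y)]
  constructor
  · -- membership : f = q attains the value
    refine ⟨q, fun y => (hqpos y).le, hqsum, ?_⟩
    have key : ∀ y, q y * Real.log (q y / p y) + γ * (q y * Real.log (q y))
        = q y * (-(γ + 1) * Real.log Z) := by
      intro y
      rw [Real.log_div (hqpos y).ne' (hp y).ne', hlogq y]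
      linear_combination (q y * Real.log (p y)) * h1
    have : (∑ y, q y * Real.log (q y / p y)) - γ * (-∑ y, q y * Real.log (q y))
        = ∑ y, (q y * Real.log (q y / p y) + γ * (q y * Real.log (q y))) := by
      rw [Finset.sum_add_distrib, ← Finset.mul_sum]
      ring
    rw [this, Finset.sum_congr rfl (fun y _ => key y), ← Finset.sum_mul, hqsum,
      one_mul]
  · -- lower bound
    rintro v ⟨f, hf0, hfs, rfl⟩
    have gibbs : ∀ y, f y - q y ≤ f y * (Real.log (f y) - Real.log (q y)) := by
      intro y
      rcases eq_or_lt_of_le (hf0 y) with h0 | h0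
      · simp [← h0]
        exact (hqpos y).le
      · have hx : (0:ℝ) < q y / f y := div_pos (hqpos y) h0
        have := Real.log_le_sub_one_of_pos hx
        rw [Real.log_div (hqpos y).ne' h0.ne'] at this
        have h2 : f y * (Real.log (q y) - Real.log (f y)) ≤ q y - f y := by
          have := mul_le_mul_of_nonneg_left this (hf0 y)
          calc f y * (Real.log (q y) - Real.log (f y)) ≤ f y * (q y / f y - 1) := this
            _ = q y - f y := by field_simp
        nlinarith
    have hS : 0 ≤ ∑ y, f y * (Real.log (f y) - Real.log (q y)) := by
      have := Finset.sum_le_sum (fun y (_ : y ∈ Finset.univ) => gibbs y)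
      have hz : ∑ y, (f y - q y) = 0 := by
        rw [Finset.sum_sub_distrib, hfs, hqsum]; ring
      linarith [hz ▸ this]
    have key : ∀ y, f y * Real.log (f y / p y) + γ * (f y * Real.log (f y))
        = (γ + 1) * (f y * (Real.log (f y) - Real.log (q y)))
          - (γ + 1) * Real.log Z * f y := by
      intro y
      rcases eq_or_lt_of_le (hf0 y) with h0 | h0
      · simp [← h0]
      · rw [Real.log_div h0.ne' (hp y).ne', hlogq y]
        linear_combination (f y * Real.log (p y)) * h1
    have hval : (∑ y, f y * Real.log (f y / p y)) - γ * (-∑ y, f y * Real.log (f y))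
        = (γ + 1) * (∑ y, f y * (Real.log (f y) - Real.log (q y)))
          - (γ + 1) * Real.log Z := by
      have e1 : (∑ y, f y * Real.log (f y / p y)) - γ * (-∑ y, f y * Real.log (f y))
          = ∑ y, (f y * Real.log (f y / p y) + γ * (f y * Real.log (f y))) := by
        rw [Finset.sum_add_distrib, ← Finset.mul_sum]; ring
      rw [e1, Finset.sum_congr rfl (fun y _ => key y), Finset.sum_sub_distrib,
        ← Finset.mul_sum, ← Finset.mul_sum, hfs, mul_one]

    rw [hval]
    nlinarith [mul_nonneg hγ1.le hS]
end

section
/- Nash equilibrium of the GEM game: let p be a strictly positive pmf on finite Y and β > 0. Define L(f,q) = Σ_y q(y) log f(y) - Σ_y p(y) log f(y) (to be minimized in f over strictly positive pmfs) and Q(f,q) = Σ_y q(y) log f(y) + β·H(q) (to be maximized in q over pmfs). Then (f*, q*) with q* = p and f*(y) = p(y)^β / Σ_{y'} p(y')^β is the unique pair such that f* is a stationary point of L(·, q*) restricted to the simplex and q* = argmax_q Q(f*, q). -/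
/-- Gibbs-type termwise inequality: `b log a - b log b ≤ a - b`. -/
lemma gem_gibbs_term_le (a b : ℝ) (ha : 0 < a) (hb : 0 ≤ b) :
    b * Real.log a - b * Real.log b ≤ a - b := by
  rcases hb.eq_or_lt with h | h
  · simp [← h]; linarith
  · have h1 : Real.log (a / b) ≤ a / b - 1 := Real.log_le_sub_one_of_pos (by positivity)
    have h2 := mul_le_mul_of_nonneg_left h1 h.le
    rw [Real.log_div ha.ne' h.ne'] at h2
    have h3 : b * (a / b - 1) = a - b := by field_simp
    nlinarith

/-- Equality case of the Gibbs termwise inequality. -/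
lemma gem_gibbs_term_eq (a b : ℝ) (ha : 0 < a) (hb : 0 < b)
    (h : b * Real.log a - b * Real.log b = a - b) : a = b := by
  by_contra hne
  have hab : a / b ≠ 1 := fun h' => hne (by field_simp at h'; linarith)
  have hlog : Real.log (a / b) ≠ 0 := by
    intro h0
    rcases Real.log_eq_zero.mp h0 with h' | h' | h'
    · exact absurd h' (by positivity)
    · exact hab h'
    · nlinarith [div_pos ha hb]
  have h1 : Real.log (a / b) + 1 < Real.exp (Real.log (a / b)) := Real.add_one_lt_exp hlog
  rw [Real.exp_log (by positivity)] at h1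
  have h2 : b * Real.log (a / b) < b * (a / b - 1) := by
    apply mul_lt_mul_of_pos_left _ hb; linarith
  rw [Real.log_div ha.ne' hb.ne'] at h2
  have h3 : b * (a / b - 1) = a - b := by field_simp
  nlinarith

/-- Summed Gibbs inequality. -/
lemma gem_gibbs_sum (ι : Type*) [Fintype ι] (a b : ι → ℝ)
    (ha : ∀ y, 0 < a y) (hb : ∀ y, 0 ≤ b y)
    (hsa : ∑ y, a y = 1) (hsb : ∑ y, b y = 1) :
    ∑ y, (b y * Real.log (a y) - b y * Real.log (b y)) ≤ 0 := by
  calc ∑ y, (b y * Real.log (a y) - b y * Real.log (b y))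
      ≤ ∑ y, (a y - b y) :=
        Finset.sum_le_sum fun y _ => gem_gibbs_term_le (a y) (b y) (ha y) (hb y)
    _ = 0 := by rw [Finset.sum_sub_distrib, hsa, hsb]; ring

/-- Nash equilibrium of the GEM game: with `L(f,q) = Σ_y q(y) log f(y) - Σ_y p(y) log f(y)`
(minimized in `f` over strictly positive pmfs) and
`Q(f,q) = Σ_y q(y) log f(y) + β·H(q)` (maximized in `q` over pmfs),
the pair `q* = p`, `f*(y) = p(y)^β / Σ_{y'} p(y')^β` is the unique pair such that
`f*` is a stationary point of `L(·,q*)` on the simplex (gradient proportional to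
the all-ones vector) and `q*` maximizes `Q(f*,·)`. -/
theorem gem_nash_equilibrium {ι : Type*} [Fintype ι]
    (p : ι → ℝ) (hp : ∀ y, 0 < p y) (hpsum : ∑ y, p y = 1)
    (β : ℝ) (hβ : 0 < β)
    (Q : (ι → ℝ) → (ι → ℝ) → ℝ)
    (hQ : Q = fun f q => (∑ y, q y * Real.log (f y)) + β * (-∑ y, q y * Real.log (q y)))
    (fstar qstar : ι → ℝ)
    (hfstar : fstar = fun y => p y ^ β / ∑ y', p y' ^ β)
    (hqstar : qstar = p) :
    -- (f*, q*) is an equilibrium pair: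
    ((∀ y, 0 < fstar y) ∧ (∑ y, fstar y = 1) ∧
      (∃ c : ℝ, ∀ y, (qstar y - p y) / fstar y = c) ∧
      (∀ q : ι → ℝ, (∀ y, 0 ≤ q y) → ∑ y, q y = 1 → Q fstar q ≤ Q fstar qstar)) ∧
    -- and it is the unique such pair:
    (∀ f q : ι → ℝ, (∀ y, 0 < f y) → ∑ y, f y = 1 →
      (∀ y, 0 ≤ q y) → ∑ y, q y = 1 →
      (∃ c : ℝ, ∀ y, (q y - p y) / f y = c) →
      (∀ q' : ι → ℝ, (∀ y, 0 ≤ q' y) → ∑ y, q' y = 1 → Q f q' ≤ Q f q) →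
      f = fstar ∧ q = qstar) := by
  subst hQ
  rcases isEmpty_or_nonempty ι with hem | hne
  · exact absurd hpsum (by simp)
  rw [hqstar]
  set S : ℝ := ∑ y', p y' ^ β with hS
  have hSpos : 0 < S := Finset.sum_pos (fun y _ => by have := hp y; positivity) Finset.univ_nonempty
  have hfpos : ∀ y, 0 < fstar y := by intro y; rw [hfstar]; have := hp y; positivity
  have hfsum : ∑ y, fstar y = 1 := by
    rw [hfstar]; rw [← Finset.sum_div]; exact div_self hSpos.ne'
  have hlogf : ∀ y, Real.log (fstar y) = β * Real.log (p y) - Real.log S := by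
    intro y
    rw [hfstar]
    simp only []
    rw [Real.log_div (by have := hp y; positivity) hSpos.ne', Real.log_rpow (hp y)]
  -- value of Σ r log fstar for a pmf r
  have hval : ∀ r : ι → ℝ, ∑ y, r y = 1 →
      ∑ y, r y * Real.log (fstar y) = β * (∑ y, r y * Real.log (p y)) - Real.log S := by
    intro r hr
    have : ∀ y, r y * Real.log (fstar y)
        = β * (r y * Real.log (p y)) - r y * Real.log S := by
      intro y; rw [hlogf y]; ring
    rw [Finset.sum_congr rfl fun y _ => this y, Finset.sum_sub_distrib,
      ← Finset.mul_sum, ← Finset.sum_mul, hr, one_mul]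
  refine ⟨⟨hfpos, hfsum, ⟨0, fun y => by simp⟩, ?_⟩, ?_⟩
  · -- maximality of p for Q fstar
    intro q hq hq1
    simp only []
    rw [hval q hq1, hval p hpsum]
    have key := gem_gibbs_sum ι p q hp hq hpsum hq1
    rw [Finset.sum_sub_distrib] at key
    have key' := mul_le_mul_of_nonneg_left key hβ.le
    nlinarith
  · -- uniqueness
    intro f q hf hf1 hq hq1 ⟨c, hc⟩ hmax
    have hc' : ∀ y, q y - p y = c * f y := by
      intro y
      have := hc y
      field_simp [(hf y).ne'] at this
      linarith
    have hc0 : c = 0 := by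
      have : ∑ y, (q y - p y) = ∑ y, c * f y := Finset.sum_congr rfl fun y _ => hc' y
      rw [Finset.sum_sub_distrib, hq1, hpsum, ← Finset.mul_sum, hf1] at this
      linarith
    have hqp : q = p := by
      funext y
      have := hc' y
      rw [hc0] at this
      linarith
    have hqp2 : p = q := hqp.symm
    subst hqp2
    refine ⟨?_, rfl⟩
    -- show f = fstar using maximality
    set T : ℝ := ∑ y, f y ^ β⁻¹ with hT
    have hTpos : 0 < T := Finset.sum_pos (fun y _ => by have := hf y; positivity)
      Finset.univ_nonempty
    set g : ι → ℝ := fun y => f y ^ β⁻¹ / T with hg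
    have hgpos : ∀ y, 0 < g y := fun y => by have := hf y; rw [hg]; positivity
    have hg1 : ∑ y, g y = 1 := by
      rw [hg]; rw [← Finset.sum_div]; exact div_self hTpos.ne'
    have hlogg : ∀ y, Real.log (g y) = β⁻¹ * Real.log (f y) - Real.log T := by
      intro y
      rw [hg]
      simp only []
      rw [Real.log_div (by have := hf y; positivity) hTpos.ne', Real.log_rpow (hf y)]
    have hlogf' : ∀ y, Real.log (f y) = β * Real.log (g y) + β * Real.log T := by
      intro y
      rw [hlogg y]
      field_simp
      ring
    have hvalf : ∀ r : ι → ℝ, ∑ y, r y = 1 →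
        ∑ y, r y * Real.log (f y)
          = β * (∑ y, r y * Real.log (g y)) + β * Real.log T := by
      intro r hr
      have : ∀ y, r y * Real.log (f y)
          = β * (r y * Real.log (g y)) + r y * (β * Real.log T) := by
        intro y; rw [hlogf' y]; ring
      rw [Finset.sum_congr rfl fun y _ => this y, Finset.sum_add_distrib,
        ← Finset.mul_sum, ← Finset.sum_mul, hr, one_mul]
    have hmg := hmax g (fun y => (hgpos y).le) hg1
    simp only [] at hmg
    rw [hvalf g hg1, hvalf p hpsum] at hmg
    have hglog : ∑ y, g y * Real.log (g y) = ∑ y, g y * Real.log (g y) := rfl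
    -- hmg : β * (Σ g log g) + β log T - β Σ g log g ≤ β Σ p log g + β log T - β Σ p log p
    have hsum_ge : 0 ≤ ∑ y, p y * Real.log (g y) - ∑ y, p y * Real.log (p y) := by
      nlinarith
    have hsum_le := gem_gibbs_sum ι g p hgpos (fun y => (hp y).le) hg1 hpsum
    rw [Finset.sum_sub_distrib] at hsum_le
    have hsum_eq : ∑ y, (p y * Real.log (g y) - p y * Real.log (p y))
        = ∑ y, (g y - p y) := by
      rw [Finset.sum_sub_distrib, Finset.sum_sub_distrib, hg1, hpsum]
      linarith
    have hterm := (Finset.sum_eq_sum_iff_of_le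
      (fun y _ => gem_gibbs_term_le (g y) (p y) (hgpos y) (hp y).le)).mp hsum_eq
    have hgp : ∀ y, g y = p y := fun y =>
      gem_gibbs_term_eq (g y) (p y) (hgpos y) (hp y) (hterm y (Finset.mem_univ y))
    -- so f y ^ β⁻¹ = p y * T, hence f y = p y ^ β * T ^ β
    have hfy : ∀ y, f y = p y ^ β * T ^ β := by
      intro y
      have h1 : f y ^ β⁻¹ = p y * T := by
        have h := hgp y
        rw [hg] at h
        simp only [] at h
        exact (div_eq_iff hTpos.ne').mp h
      have h2 : (f y ^ β⁻¹) ^ β = f y := Real.rpow_inv_rpow (hf y).le hβ.ne'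
      rw [h1, Real.mul_rpow (hp y).le hTpos.le] at h2
      linarith
    have hTS : T ^ β * S = 1 := by
      have : ∑ y, f y = ∑ y, p y ^ β * T ^ β := Finset.sum_congr rfl fun y _ => hfy y
      rw [hf1] at this
      rw [hS]
      have h2 : ∑ y, p y ^ β * T ^ β = (∑ y', p y' ^ β) * T ^ β := by
        rw [Finset.sum_mul]
      rw [h2] at this
      linarith
    funext y
    rw [hfy y, hfstar]
    have hTb : T ^ β = S⁻¹ := by
      field_simp
      nlinarith
    rw [hTb]
    simp only []
    rw [div_eq_mul_inv]
end
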